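/- arXiv:2406.09218 — 2 statements merged into one kernel-verified Lean document; each statement's English description precedes it below -/
import Mathlib

section
/- Cartan subalgebras of ideals in reductive Lie algebras: Let 𝔤 be a finite-dimensional reductive Lie algebra over ℂ, let 𝔥 ⊆ 𝔤 be a Lie ideal, and let 𝔱 ⊆ 𝔤 be a Cartan subalgebra. Then 𝔥 ∩ 𝔱 is a Cartan subalgebra of 𝔥. -/
/-!
STATEMENT 18: Cartan subalgebras of ideals in reductive Lie algebras.
If `𝔤` is a finite-dimensional reductive complex Lie algebra (reductive in the sense that
every Lie ideal admits a complementary Lie ideal), `𝔥 ⊆ 𝔤` is a Lie ideal and `𝔱 ⊆ 𝔤` is a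
Cartan subalgebra, then `𝔥 ∩ 𝔱` is a Cartan subalgebra of `𝔥`.
-/

theorem cartan_inter_ideal_isCartanSubalgebra
    (L : Type) [LieRing L] [LieAlgebra ℂ L] [FiniteDimensional ℂ L]
    (hreductive : ∀ I : LieIdeal ℂ L, ∃ J : LieIdeal ℂ L, IsCompl I J)
    (H : LieIdeal ℂ L) (T : LieSubalgebra ℂ L) (hT : T.IsCartanSubalgebra) :
    LieSubalgebra.IsCartanSubalgebra
      (LieSubalgebra.comap (LieIdeal.toLieSubalgebra ℂ L H).incl T) := by
  haveI := hT
  obtain ⟨K, hK⟩ := hreductive H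
  -- decomposition of any element
  have hsup : ∀ x : L, ∃ h ∈ H, ∃ k ∈ K, h + k = x := by
    intro x
    have hx : x ∈ H ⊔ K := by
      rw [codisjoint_iff.mp hK.codisjoint]; trivial
    exact (LieSubmodule.mem_sup H K x).mp hx
  -- H and K commute
  have hcomm : ∀ x ∈ H, ∀ y ∈ K, ⁅x, y⁆ = (0 : L) := by
    intro x hx y hy
    have h1 : ⁅x, y⁆ ∈ H := by
      have h0 : ⁅y, x⁆ ∈ H := H.lie_mem hx
      rw [← lie_skew]; exact H.neg_mem h0
    have h2 : ⁅x, y⁆ ∈ K := K.lie_mem hy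
    have h3 : ⁅x, y⁆ ∈ H ⊓ K := ⟨h1, h2⟩
    rw [disjoint_iff.mp hK.disjoint, LieSubmodule.mem_bot] at h3
    exact h3
  -- IsCompl of underlying submodules
  have hK' : IsCompl (H : Submodule ℂ L) (K : Submodule ℂ L) := by
    constructor
    · rw [Submodule.disjoint_def]
      intro x hxH hxK
      have h3 : x ∈ H ⊓ K := ⟨hxH, hxK⟩
      rw [disjoint_iff.mp hK.disjoint, LieSubmodule.mem_bot] at h3
      exact h3
    · rw [codisjoint_iff_le_sup]
      intro x _
      obtain ⟨h, hh, k, hk, rfl⟩ := hsup x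
      exact Submodule.add_mem_sup hh hk
  set f : L →ₗ[ℂ] L :=
    (H : Submodule ℂ L).subtype ∘ₗ
      ((H : Submodule ℂ L).projectionOnto (K : Submodule ℂ L) hK') with hf
  have hfx : ∀ h ∈ H, ∀ k ∈ K, f (h + k) = h := by
    intro h hh k hk
    have e1 : f h = h := by
      simpa [hf] using hh
    have e2 : f k = 0 := by
      simpa [hf] using hk
    rw [map_add, e1, e2, add_zero]
  have hfH : ∀ x : L, f x ∈ H := by
    intro x
    exact ((H : Submodule ℂ L).linearProjOfIsCompl (K : Submodule ℂ L) hK' x).2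
  have hfK : ∀ x : L, x - f x ∈ K := by
    intro x
    obtain ⟨h, hh, k, hk, rfl⟩ := hsup x
    rw [hfx h hh k hk, add_sub_cancel_left]
    exact hk
  -- f commutes with all brackets on the left
  have hf_comm : ∀ y x : L, f ⁅y, x⁆ = ⁅y, f x⁆ := by
    intro y x
    obtain ⟨hy, hhy, ky, hky, rfl⟩ := hsup y
    obtain ⟨hx, hhx, kx, hkx, rfl⟩ := hsup x
    have z1 : ⁅hy, kx⁆ = (0 : L) := hcomm hy hhy kx hkx
    have z2 : ⁅ky, hx⁆ = (0 : L) := by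
      rw [← lie_skew, hcomm hx hhx ky hky, neg_zero]
    have e : ⁅hy + ky, hx + kx⁆ = ⁅hy, hx⁆ + ⁅ky, kx⁆ := by
      rw [lie_add, add_lie, add_lie, z1, z2]; abel
    rw [hfx hx hhx kx hkx, e,
      hfx ⁅hy, hx⁆ (H.lie_mem hhx) ⁅ky, kx⁆ (K.lie_mem hkx), add_lie, z2, add_zero]
  -- f preserves T
  have hfT : ∀ t ∈ T, f t ∈ T := by
    have hZ := LieAlgebra.zeroRootSubalgebra_eq_of_is_cartan (R := ℂ) (L := L) T
    intro t ht
    rw [← hZ] at ht ⊢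
    rw [LieAlgebra.mem_zeroRootSubalgebra] at ht ⊢
    intro y
    obtain ⟨k, hk⟩ := ht y
    refine ⟨k, ?_⟩
    have key : ∀ n : ℕ, ∀ x : L,
        (LieModule.toEnd ℂ T L y ^ n) (f x) = f ((LieModule.toEnd ℂ T L y ^ n) x) := by
      intro n
      induction n with
      | zero => intro x; simp
      | succ n ih =>
        intro x
        rw [pow_succ', Module.End.mul_apply, Module.End.mul_apply, ih x]
        exact (hf_comm (y : L) ((LieModule.toEnd ℂ T L y ^ n) x)).symm
    rw [key k t, hk, map_zero]
  constructor
  · -- nilpotency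
    haveI : LieModule.IsNilpotent T T := hT.nilpotent
    let φ : (LieSubalgebra.comap (LieIdeal.toLieSubalgebra ℂ L H).incl T) →ₗ⁅ℂ⁆ T :=
      { toFun := fun x => ⟨((x : ↥(LieIdeal.toLieSubalgebra ℂ L H)) : L), x.2⟩
        map_add' := fun x y => rfl
        map_smul' := fun c x => rfl
        map_lie' := fun {x y} => rfl }
    have hφ : Function.Injective φ := by
      intro x y hxy
      have h1 : ((φ x : ↥T) : L) = ((φ y : ↥T) : L) := congrArg Subtype.val hxy
      exact Subtype.ext (Subtype.ext h1)
    exact hφ.lieAlgebra_isNilpotent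
  · -- self-normalizing
    refine le_antisymm ?_ (LieSubalgebra.le_normalizer _)
    intro x hx
    rw [LieSubalgebra.mem_normalizer_iff] at hx
    show ((x : ↥(LieIdeal.toLieSubalgebra ℂ L H)) : L) ∈ T
    have hxT : (x : L) ∈ T.normalizer := by
      rw [LieSubalgebra.mem_normalizer_iff]
      intro t ht
      have hft : f t ∈ T := hfT t ht
      have hftH : f t ∈ H := hfH t
      have hmem : (⟨f t, hftH⟩ : ↥(LieIdeal.toLieSubalgebra ℂ L H)) ∈
          LieSubalgebra.comap (LieIdeal.toLieSubalgebra ℂ L H).incl T := hft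
      have hb : ((⁅x, (⟨f t, hftH⟩ : ↥(LieIdeal.toLieSubalgebra ℂ L H))⁆ :
          ↥(LieIdeal.toLieSubalgebra ℂ L H)) : L) ∈ T := hx _ hmem
      have e : ⁅(x : L), t⁆ = ⁅(x : L), f t⁆ := by
        have z : ⁅(x : L), t - f t⁆ = 0 := hcomm (x : L) x.2 _ (hfK t)
        calc ⁅(x : L), t⁆ = ⁅(x : L), f t + (t - f t)⁆ := by rw [add_sub_cancel]
          _ = ⁅(x : L), f t⁆ + ⁅(x : L), t - f t⁆ := lie_add _ _ _
          _ = ⁅(x : L), f t⁆ := by rw [z, add_zero]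
      rw [e]
      exact hb
    rw [hT.self_normalizing] at hxT
    exact hxT
end

section
/- Efimov's lemma on ideals generated by products of linear forms: Let k be a field and B = k[z_1,…,z_n] a polynomial ring. Let ℓ_1,…,ℓ_s ∈ B be pairwise linearly independent nonzero linear forms in the variables z_i, and for 1 ≤ i ≤ r (with r ≥ 1) let P_i = ∏_{j=1}^s ℓ_j^{d_{i,j}} with exponents d_{i,j} ∈ ℤ_{≥0}. Set d_j = max_{1≤i≤r} d_{i,j} for 1 ≤ j ≤ s. Then the following are equivalent: (i) every homogeneous polynomial in B of degree ≥ ∑_{j=1}^s d_j − n + 1 lies in the ideal (P_1,…,P_r); (ii) the ideal (P_1,…,P_r) ⊆ B has finite codimension as a k-vector space; (iii) for every sequence p_1,…,p_r of elements of {1,…,s} such that d_{i,p_i} > 0 for all 1 ≤ i ≤ r, the linear forms ℓ_{p_1},…,ℓ_{p_r} span the n-dimensional space of linear forms in z_1,…,z_n. -/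
/-!
STATEMENT 19: Efimov's lemma on ideals generated by products of linear forms.
`B = k[z_1,…,z_n]`, `ℓ_1,…,ℓ_s` pairwise linearly independent nonzero linear forms,
`P_i = ∏_j ℓ_j^{d_{i,j}}` for `1 ≤ i ≤ r`, `d_j = max_i d_{i,j}`.  The following are
equivalent: (i) every homogeneous polynomial of degree `≥ ∑_j d_j − n + 1` lies in
`(P_1,…,P_r)`; (ii) `(P_1,…,P_r)` has finite codimension; (iii) for every choice
`p_1,…,p_r` with `d_{i,p_i} > 0`, the forms `ℓ_{p_1},…,ℓ_{p_r}` span the space of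
linear forms.
-/

set_option linter.unusedVariables false


open MvPolynomial Finset

variable {k : Type} [Field k]

/-- A degree-1 exponent vector is a single. -/
lemma finsupp_degree_one {σ : Type*} (d : σ →₀ ℕ) (hd : d.degree = 1) :
    ∃ m, d = Finsupp.single m 1 := by
  classical
  have hs : d.support.Nonempty := by
    rcases Finset.eq_empty_or_nonempty d.support with h | h
    · exfalso
      have : d = 0 := Finsupp.support_eq_empty.mp h
      simp [this, Finsupp.degree] at hd
    · exact h
  obtain ⟨m, hm⟩ := hs
  refine ⟨m, ?_⟩
  have hdm : d m = 1 := by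
    have h1 : d m ≤ d.degree := Finsupp.le_degree m d
    have h2 : 1 ≤ d m := Nat.one_le_iff_ne_zero.mpr (Finsupp.mem_support_iff.mp hm)
    omega
  ext m'
  by_cases h : m' = m
  · simp [h, hdm]
  · simp only [Finsupp.single_apply]
    rw [if_neg (fun hh => h hh.symm)]
    by_contra hne
    have hm' : m' ∈ d.support := Finsupp.mem_support_iff.mpr hne
    have hsub : ({m, m'} : Finset σ) ⊆ d.support := by
      intro x hx
      simp only [Finset.mem_insert, Finset.mem_singleton] at hx
      rcases hx with rfl | rfl <;> assumption
    have : ∑ x ∈ ({m, m'} : Finset σ), d x ≤ d.degree := by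
      unfold Finsupp.degree
      exact Finset.sum_le_sum_of_subset hsub
    rw [Finset.sum_pair (fun hh => h hh.symm)] at this
    omega

/-- Representation of a homogeneous degree-1 polynomial. -/
lemma lin_rep {σ : Type*} [Fintype σ] {ℓ : MvPolynomial σ k}
    (h : ℓ.IsHomogeneous 1) :
    ℓ = ∑ m : σ, C (coeff (Finsupp.single m 1) ℓ) * X m := by
  classical
  apply MvPolynomial.ext
  intro d
  rw [coeff_sum]
  simp only [coeff_C_mul, coeff_X']
  by_cases hd : d.degree = 1
  · obtain ⟨m0, rfl⟩ := finsupp_degree_one d hd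
    rw [Finset.sum_eq_single m0]
    · simp
    · intro b _ hb
      rw [if_neg, mul_zero]
      intro hh
      exact hb (Finsupp.single_left_injective (one_ne_zero (α := ℕ)) hh)
    · simp
  · rw [h.coeff_eq_zero (by simpa using hd)]
    rw [Finset.sum_eq_zero]
    intro m _
    rw [if_neg, mul_zero]
    rintro rfl
    exact hd (Finsupp.degree_single _ _)

variable {k : Type} [Field k] {σ : Type*}

lemma hc_mul_homog {e m : ℕ} {P : MvPolynomial σ k} (hP : P.IsHomogeneous m)
    (c : MvPolynomial σ k) :
    homogeneousComponent e (c * P) =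
      if m ≤ e then homogeneousComponent (e - m) c * P else 0 := by
  classical
  conv_lhs => rw [← sum_homogeneousComponent c]
  rw [Finset.sum_mul, map_sum]
  have hterm : ∀ i, homogeneousComponent e (homogeneousComponent i c * P) =
      if i + m = e then homogeneousComponent i c * P else 0 := by
    intro i
    have : (homogeneousComponent i c * P).IsHomogeneous (i + m) :=
      (homogeneousComponent_isHomogeneous i c).mul hP
    rw [homogeneousComponent_of_mem this]
    simp [eq_comm]
  simp only [hterm]
  by_cases hme : m ≤ e
  · have hiff : ∀ i : ℕ, (i + m = e) ↔ (i = e - m) := by omega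
    simp only [hiff]
    rw [Finset.sum_ite_eq' (Finset.range (c.totalDegree + 1)) (e - m)
      (fun i => homogeneousComponent i c * P)]
    by_cases hmem : e - m ∈ Finset.range (c.totalDegree + 1)
    · rw [if_pos hmem, if_pos hme]
    · rw [if_neg hmem, if_pos hme,
        homogeneousComponent_eq_zero _ c (by simp at hmem; omega), zero_mul]
  · rw [if_neg hme, Finset.sum_eq_zero]
    intro i _
    rw [if_neg]
    omega

lemma hc_mem_span {κ : Type} [Fintype κ] (P : κ → MvPolynomial σ k) (m : κ → ℕ)
    (hP : ∀ i, (P i).IsHomogeneous (m i)) {f : MvPolynomial σ k}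
    (hf : f ∈ Ideal.span (Set.range P)) (e : ℕ) :
    homogeneousComponent e f ∈ Ideal.span (Set.range P) := by
  classical
  obtain ⟨c, rfl⟩ := Ideal.mem_span_range_iff_exists_fun.mp hf
  rw [map_sum]
  apply Ideal.sum_mem
  intro i _
  rw [hc_mul_homog (hP i)]
  split
  · exact Ideal.mul_mem_left _ _ (Ideal.subset_span ⟨i, rfl⟩)
  · exact Ideal.zero_mem _

lemma homog_one_mem_span_X [Fintype σ] {ℓ : MvPolynomial σ k}
    (h : ℓ.IsHomogeneous 1) :
    ℓ ∈ Submodule.span k (Set.range (X : σ → MvPolynomial σ k)) := by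
  classical
  rw [lin_rep h]
  apply Submodule.sum_mem
  intro m _
  rw [← smul_eq_C_mul]
  exact Submodule.smul_mem _ _ (Submodule.subset_span ⟨m, rfl⟩)

lemma exists_coeff_ne_zero' [Fintype σ] {ℓ : MvPolynomial σ k}
    (h : ℓ.IsHomogeneous 1) (hne : ℓ ≠ 0) :
    ∃ m0, coeff (Finsupp.single m0 1) ℓ ≠ 0 := by
  by_contra hc
  push_neg at hc
  apply hne
  rw [lin_rep h]
  exact Finset.sum_eq_zero fun m _ => by rw [hc m, map_zero, zero_mul]

section QT

variable [Fintype σ] [DecidableEq σ] (ℓ : MvPolynomial σ k) (m0 : σ)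

/-- substitution killing `ℓ` -/
noncomputable def qsub : σ → MvPolynomial {m : σ // m ≠ m0} k := fun m =>
  if h : m = m0 then
    (-(coeff (Finsupp.single m0 1) ℓ)⁻¹) •
      ∑ m' : {m : σ // m ≠ m0}, C (coeff (Finsupp.single m'.1 1) ℓ) * X m'
  else X ⟨m, h⟩

noncomputable def qmap : MvPolynomial σ k →ₐ[k] MvPolynomial {m : σ // m ≠ m0} k :=
  aeval (qsub ℓ m0)

lemma qsub_homog : ∀ m, ((qsub ℓ m0) m).IsHomogeneous 1 := by
  intro m
  unfold qsub
  split
  · rw [smul_eq_C_mul]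
    apply IsHomogeneous.C_mul
    exact IsHomogeneous.sum _ _ _ fun m' _ => (isHomogeneous_X k m').C_mul _
  · exact isHomogeneous_X k _

lemma qmap_homog {e : ℕ} {f : MvPolynomial σ k} (hf : f.IsHomogeneous e) :
    ((qmap ℓ m0) f).IsHomogeneous e := by
  have := hf.aeval (qsub ℓ m0) (qsub_homog ℓ m0)
  rwa [one_mul] at this

lemma qmap_X_ne (m : σ) (h : m ≠ m0) : (qmap ℓ m0) (X m) = X ⟨m, h⟩ := by
  unfold qmap
  rw [aeval_X]
  unfold qsub
  rw [dif_neg h]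

lemma qmap_rename (g : MvPolynomial {m : σ // m ≠ m0} k) :
    (qmap ℓ m0) (rename Subtype.val g) = g := by
  unfold qmap
  rw [aeval_rename]
  have : (qsub ℓ m0 ∘ Subtype.val : {m : σ // m ≠ m0} → _) = X := by
    funext t
    show qsub ℓ m0 t.1 = X t
    unfold qsub
    rw [dif_neg t.2]
  rw [this, aeval_X_left_apply]

variable (hh : ℓ.IsHomogeneous 1) (hc : coeff (Finsupp.single m0 1) ℓ ≠ 0)

include hh in
lemma lin_split :
    ℓ = C (coeff (Finsupp.single m0 1) ℓ) * X m0 +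
      ∑ m' : {m : σ // m ≠ m0}, C (coeff (Finsupp.single m'.1 1) ℓ) * X m'.1 := by
  conv_lhs => rw [lin_rep hh]
  rw [← Finset.add_sum_erase _ _ (Finset.mem_univ m0),
    Finset.sum_subtype (p := fun m => m ≠ m0) (Finset.univ.erase m0)
      (fun x => by simp [Finset.mem_erase]) (fun m => C (coeff (Finsupp.single m 1) ℓ) * X m)]

include hh in
lemma qmap_rename_sum :
    rename (Subtype.val : {m : σ // m ≠ m0} → σ)
      (∑ m' : {m : σ // m ≠ m0}, C (coeff (Finsupp.single m'.1 1) ℓ) * X m') =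
      ℓ - C (coeff (Finsupp.single m0 1) ℓ) * X m0 := by
  rw [map_sum]
  simp only [map_mul, rename_C, rename_X]
  rw [eq_sub_iff_add_eq, add_comm]
  exact (lin_split ℓ m0 hh).symm

include hh hc in
lemma qmap_sub_mem (f : MvPolynomial σ k) :
    f - (rename Subtype.val ((qmap ℓ m0) f)) ∈ Ideal.span {ℓ} := by
  induction f using MvPolynomial.induction_on with
  | C a => simp [qmap]
  | add p q hp hq =>
      have heq : p + q - rename Subtype.val ((qmap ℓ m0) (p + q)) =
          (p - rename Subtype.val ((qmap ℓ m0) p)) +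
          (q - rename Subtype.val ((qmap ℓ m0) q)) := by
        rw [map_add, map_add]; ring
      rw [heq]
      exact Ideal.add_mem _ hp hq
  | mul_X p m hp =>
      set co := coeff (Finsupp.single m0 1) ℓ with hco
      have key : X m - rename Subtype.val ((qmap ℓ m0) (X m)) ∈ Ideal.span {ℓ} := by
        by_cases h : m = m0
        · rw [h]
          have hq : rename (Subtype.val : {m : σ // m ≠ m0} → σ) ((qmap ℓ m0) (X m0)) =
              (-(co)⁻¹) • (ℓ - C co * X m0) := by
            unfold qmap
            rw [aeval_X]
            unfold qsub
            rw [dif_pos rfl, map_smul, qmap_rename_sum ℓ m0 hh]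
          rw [hq]
          have h1 : (co)⁻¹ • (C co * X m0) = X m0 := by
            rw [smul_eq_C_mul, ← mul_assoc, ← map_mul, inv_mul_cancel₀ hc, map_one, one_mul]
          have h2 : X m0 - (-(co)⁻¹) • (ℓ - C co * X m0) = (co)⁻¹ • ℓ := by
            rw [neg_smul, sub_neg_eq_add, smul_sub, h1]
            abel
          rw [h2, smul_eq_C_mul]
          exact Ideal.mul_mem_left _ _ (Ideal.subset_span rfl)
        · rw [qmap_X_ne ℓ m0 m h, rename_X, sub_self]
          exact Ideal.zero_mem _
      have heq : p * X m - rename Subtype.val ((qmap ℓ m0) (p * X m)) =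
          (p - rename Subtype.val ((qmap ℓ m0) p)) * X m +
          (rename Subtype.val ((qmap ℓ m0) p)) *
            (X m - rename Subtype.val ((qmap ℓ m0) (X m))) := by
        rw [map_mul, map_mul]; ring
      rw [heq]
      exact Ideal.add_mem _ (Ideal.mul_mem_right _ _ hp) (Ideal.mul_mem_left _ _ key)

include hh hc in
lemma qmap_self : (qmap ℓ m0) ℓ = 0 := by
  set co := coeff (Finsupp.single m0 1) ℓ with hco
  set L := ∑ m' : {m : σ // m ≠ m0}, C (coeff (Finsupp.single m'.1 1) ℓ) * X m' with hL
  have hXm0 : (qmap ℓ m0) (X m0) = (-(co)⁻¹) • L := by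
    unfold qmap
    rw [aeval_X]
    unfold qsub
    rw [dif_pos rfl]
  rw [show (qmap ℓ m0) ℓ = (qmap ℓ m0) (C (coeff (Finsupp.single m0 1) ℓ) * X m0 +
      ∑ m' : {m : σ // m ≠ m0}, C (coeff (Finsupp.single m'.1 1) ℓ) * X m'.1) from
    congrArg _ (lin_split ℓ m0 hh)]
  have hrest : (qmap ℓ m0)
      (∑ m' : {m : σ // m ≠ m0}, C (coeff (Finsupp.single m'.1 1) ℓ) * X m'.1) = L := by
    rw [map_sum]
    apply Finset.sum_congr rfl
    intro t _
    rw [map_mul, algHom_C, qmap_X_ne ℓ m0 t.1 t.2, MvPolynomial.algebraMap_eq]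
  rw [map_add, hrest, map_mul, algHom_C, hXm0, MvPolynomial.algebraMap_eq, smul_eq_C_mul,
    ← mul_assoc, ← map_mul, mul_neg, mul_inv_cancel₀ hc, map_neg, map_one, neg_one_mul,
    neg_add_cancel]

include hh hc in
lemma qmap_ker (f : MvPolynomial σ k) :
    (qmap ℓ m0) f = 0 ↔ f ∈ Ideal.span {ℓ} := by
  constructor
  · intro h
    have := qmap_sub_mem ℓ m0 hh hc f
    rwa [h, map_zero, sub_zero] at this
  · intro h
    obtain ⟨a, rfl⟩ := Ideal.mem_span_singleton'.mp h
    rw [map_mul, qmap_self ℓ m0 hh hc, mul_zero]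

lemma qmap_span_X :
    Submodule.map (qmap ℓ m0).toLinearMap
      (Submodule.span k (Set.range (X : σ → MvPolynomial σ k))) =
      Submodule.span k (Set.range (X : {m : σ // m ≠ m0} → _)) := by
  rw [Submodule.map_span, ← Set.range_comp]
  apply le_antisymm
  · rw [Submodule.span_le]
    rintro _ ⟨m, rfl⟩
    exact homog_one_mem_span_X (qmap_homog ℓ m0 (isHomogeneous_X k m))
  · rw [Submodule.span_le]
    rintro _ ⟨t, rfl⟩
    apply Submodule.subset_span
    refine ⟨t.1, ?_⟩
    show (qmap ℓ m0) (X t.1) = X t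
    rw [qmap_X_ne ℓ m0 t.1 t.2]

end QT


lemma homog_zero_of_empty {σ : Type*} [Fintype σ] (hcard : Fintype.card σ = 0)
    {f : MvPolynomial σ k} {e : ℕ} (hf : f.IsHomogeneous e) (he : 1 ≤ e) : f = 0 := by
  have : IsEmpty σ := Fintype.card_eq_zero_iff.mp hcard
  rw [eq_C_of_isEmpty f, hf.coeff_eq_zero (d := 0) (by rw [map_zero]; omega), map_zero]

lemma efimov_aux (M : ℕ) : ∀ (σ : Type) [Fintype σ] [DecidableEq σ]
    (sd : ℕ) (ι κ : Type) [Fintype ι] [Fintype κ]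
    (ℓ : ι → MvPolynomial σ k), (∀ j, (ℓ j).IsHomogeneous 1) → (∀ j, ℓ j ≠ 0) →
    ∀ (d : κ → ι → ℕ), (∑ j, (Finset.univ.sup fun i => d i j)) = sd →
    Fintype.card σ + sd ≤ M →
    (∀ p : κ → ι, (∀ i, 0 < d i (p i)) →
      Submodule.span k (Set.range fun i => ℓ (p i)) =
        Submodule.span k (Set.range (X : σ → MvPolynomial σ k))) →
    ∀ (e : ℕ), sd + 1 ≤ e + Fintype.card σ →
    ∀ (f : MvPolynomial σ k), f.IsHomogeneous e →
    f ∈ Ideal.span (Set.range fun i => ∏ j, ℓ j ^ d i j) := by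
  induction M with
  | zero =>
    intro σ _ _ sd ι κ _ _ ℓ hhom hne d hsd hM hiii e he f hf
    have hσ : Fintype.card σ = 0 := by omega
    rw [homog_zero_of_empty hσ hf (by omega)]
    exact Ideal.zero_mem _
  | succ M ih =>
    intro σ _ _ sd ι κ _ _ ℓ hhom hne d hsd hM hiii e he f hf
    classical
    by_cases hσ0 : Fintype.card σ = 0
    · rw [homog_zero_of_empty hσ0 hf (by omega)]
      exact Ideal.zero_mem _
    have hκ : Nonempty κ := by
      by_contra hk
      have hempty : IsEmpty κ := not_nonempty_iff.mp hk
      have hsp := hiii (fun i => (hempty.elim i)) (fun i => (hempty.elim i))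
      obtain ⟨m⟩ := Fintype.card_pos_iff.mp (Nat.pos_of_ne_zero hσ0)
      have hX : (X m : MvPolynomial σ k) ∈
          Submodule.span k (Set.range fun i : κ => ℓ (hempty.elim i)) := by
        rw [hsp]; exact Submodule.subset_span ⟨m, rfl⟩
      rw [Set.range_eq_empty, Submodule.span_empty, Submodule.mem_bot] at hX
      exact X_ne_zero (R := k) m hX
    by_cases h1 : ∃ i0, ∀ j, d i0 j = 0
    · obtain ⟨i0, hi0⟩ := h1
      have hone : (∏ j, ℓ j ^ d i0 j) = 1 :=
        Finset.prod_eq_one fun j _ => by rw [hi0 j, pow_zero]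
      have : (1 : MvPolynomial σ k) ∈ Ideal.span (Set.range fun i => ∏ j, ℓ j ^ d i j) := by
        rw [← hone]; exact Ideal.subset_span ⟨i0, rfl⟩
      exact Ideal.eq_top_iff_one _ |>.mpr this ▸ Submodule.mem_top
    push_neg at h1
    obtain ⟨i0⟩ := hκ
    obtain ⟨j0, hj0⟩ := h1 i0
    set D := Finset.univ.sup (fun i => d i j0) with hD
    have hD1 : 1 ≤ D := by
      refine le_trans (Nat.one_le_iff_ne_zero.mpr hj0) ?_
      rw [hD]
      exact Finset.le_sup (f := fun i => d i j0) (Finset.mem_univ i0)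
    -- reduction A : quotient by ℓ j0
    obtain ⟨m0, hm0⟩ := exists_coeff_ne_zero' (hhom j0) (hne j0)
    set φ := qmap (ℓ j0) m0 with hφdef
    have hφℓ0 : φ (ℓ j0) = 0 := qmap_self (ℓ j0) m0 (hhom j0) hm0
    set ι' := {j : ι // φ (ℓ j) ≠ 0} with hι'
    set S := {i : κ // ∀ j : ι, φ (ℓ j) = 0 → d i j = 0} with hS
    set ℓ' : ι' → MvPolynomial {m : σ // m ≠ m0} k := fun j => φ (ℓ j.1) with hℓ'
    set d' : S → ι' → ℕ := fun i j => d i.1 j.1 with hd'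
    set sA := ∑ j' : ι', (Finset.univ.sup fun i : S => d' i j') with hsA
    have hcard' : Fintype.card {m : σ // m ≠ m0} = Fintype.card σ - 1 := by
      simp [Fintype.card_subtype_compl, Fintype.card_subtype_eq]
    have hsAle : sA + D ≤ sd := by
      have h1' : sA ≤ ∑ j' : ι', (Finset.univ.sup fun i : κ => d i j'.1) := by
        apply Finset.sum_le_sum
        intro j' _
        exact Finset.sup_le fun i _ => Finset.le_sup (f := fun i : κ => d i j'.1) (Finset.mem_univ i.1)
      have hsplit : (∑ j' : ι', Finset.univ.sup fun i : κ => d i j'.1)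
          + ∑ j' : {j : ι // ¬ φ (ℓ j) ≠ 0}, (Finset.univ.sup fun i : κ => d i j'.1) = sd := by
        rw [← hsd]
        exact Fintype.sum_subtype_add_sum_subtype (fun j => φ (ℓ j) ≠ 0)
          (fun j => Finset.univ.sup fun i => d i j)
      have hDle : D ≤ ∑ j' : {j : ι // ¬ φ (ℓ j) ≠ 0},
          (Finset.univ.sup fun i : κ => d i j'.1) := by
        have heq : D = (fun j' : {j : ι // ¬ φ (ℓ j) ≠ 0} =>
            Finset.univ.sup fun i : κ => d i j'.1) ⟨j0, by simp [hφℓ0]⟩ := rfl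
        rw [heq]
        exact Finset.single_le_sum (f := fun j' : {j : ι // ¬ φ (ℓ j) ≠ 0} =>
          Finset.univ.sup fun i : κ => d i j'.1) (fun _ _ => Nat.zero_le _) (Finset.mem_univ _)
      omega
    have hiii' : ∀ q : S → ι', (∀ i, 0 < d' i (q i)) →
        Submodule.span k (Set.range fun i => ℓ' (q i)) =
          Submodule.span k (Set.range (X : {m : σ // m ≠ m0} → _)) := by
      intro q hq
      have hext : ∀ i : κ, ¬ (∀ j : ι, φ (ℓ j) = 0 → d i j = 0) →
          ∃ j, φ (ℓ j) = 0 ∧ 0 < d i j := by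
        intro i hi
        push_neg at hi
        obtain ⟨j, hj1, hj2⟩ := hi
        exact ⟨j, hj1, Nat.pos_of_ne_zero hj2⟩
      set p : κ → ι := fun i => if h : (∀ j : ι, φ (ℓ j) = 0 → d i j = 0)
        then (q ⟨i, h⟩).1 else (hext i h).choose with hp
      have hppos : ∀ i, 0 < d i (p i) := by
        intro i
        rw [hp]
        dsimp only
        split
        · exact hq ⟨i, ‹_›⟩
        · exact (hext i ‹_›).choose_spec.2
      have hmap := congrArg (Submodule.map φ.toLinearMap) (hiii p hppos)
      rw [qmap_span_X, Submodule.map_span, ← Set.range_comp] at hmap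
      rw [← hmap]
      apply le_antisymm
      · rw [Submodule.span_le]
        rintro _ ⟨i, rfl⟩
        apply Submodule.subset_span
        refine ⟨i.1, ?_⟩
        show φ (ℓ (p i.1)) = ℓ' (q i)
        rw [hp]
        dsimp only
        rw [dif_pos i.2]
      · rw [Submodule.span_le]
        rintro _ ⟨i, rfl⟩
        show φ (ℓ (p i)) ∈ _
        by_cases h : (∀ j : ι, φ (ℓ j) = 0 → d i j = 0)
        · rw [hp]
          dsimp only
          rw [dif_pos h]
          exact Submodule.subset_span ⟨⟨i, h⟩, rfl⟩
        · rw [hp]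
          dsimp only
          rw [dif_neg h, (hext i h).choose_spec.1]
          exact Submodule.zero_mem _
    have hφf : φ f ∈ Ideal.span (Set.range fun i : S => ∏ j' : ι', ℓ' j' ^ d' i j') :=
      ih {m : σ // m ≠ m0} sA ι' S ℓ' (fun j => qmap_homog _ _ (hhom j.1)) (fun j => j.2) d' rfl
        (by omega) hiii' e (by omega) (φ f) (qmap_homog _ _ hf)
    have hgen : ∀ i : S, (∏ j' : ι', ℓ' j' ^ d' i j') = φ (∏ j, ℓ j ^ d i.1 j) := by
      intro i
      rw [map_prod]
      simp only [map_pow]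
      rw [← Fintype.prod_subtype_mul_prod_subtype (fun j => φ (ℓ j) ≠ 0)
        (fun j => φ (ℓ j) ^ d i.1 j)]
      have h2 : ∏ j' : {j : ι // ¬ φ (ℓ j) ≠ 0}, φ (ℓ j'.1) ^ d i.1 j'.1 = 1 :=
        Finset.prod_eq_one fun j' _ => by rw [i.2 j'.1 (not_not.mp j'.2), pow_zero]
      rw [h2, mul_one]
    simp only [hgen] at hφf
    obtain ⟨c, hc⟩ := Ideal.mem_span_range_iff_exists_fun.mp hφf
    set g0 : MvPolynomial σ k :=
      ∑ i : S, rename Subtype.val (c i) * (∏ j, ℓ j ^ d i.1 j) with hg0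
    have hg0mem : g0 ∈ Ideal.span (Set.range fun i : κ => ∏ j, ℓ j ^ d i j) :=
      Ideal.sum_mem _ fun i _ =>
        Ideal.mul_mem_left _ _ (Ideal.subset_span ⟨i.1, rfl⟩)
    have hker : f - g0 ∈ Ideal.span {ℓ j0} := by
      rw [← qmap_ker (ℓ j0) m0 (hhom j0) hm0]
      rw [map_sub, hg0, map_sum]
      have : ∀ i : S, φ (rename Subtype.val (c i) * (∏ j, ℓ j ^ d i.1 j)) =
          c i * φ (∏ j, ℓ j ^ d i.1 j) := by
        intro i
        rw [map_mul, qmap_rename]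
      simp only [← hφdef, this]
      rw [← hc]
      exact sub_self _
    obtain ⟨a, ha⟩ := Ideal.mem_span_singleton'.mp hker
    -- take degree-e homogeneous components
    have hPhom : ∀ i : κ, (∏ j, ℓ j ^ d i j).IsHomogeneous (∑ j, 1 * d i j) :=
      fun i => IsHomogeneous.prod _ _ _ fun j _ => (hhom j).pow _
    have hcg0 : homogeneousComponent e g0 ∈
        Ideal.span (Set.range fun i : κ => ∏ j, ℓ j ^ d i j) :=
      hc_mem_span _ _ hPhom hg0mem e
    have hsplit : f = homogeneousComponent e g0 +
        (if 1 ≤ e then homogeneousComponent (e - 1) a * ℓ j0 else 0) := by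
      have h3 := congrArg (homogeneousComponent e) ha
      rw [hc_mul_homog (hhom j0) a, map_sub,
        homogeneousComponent_of_mem hf, if_pos rfl] at h3
      rw [h3]
      ring
    by_cases he1 : 1 ≤ e
    · rw [hsplit, if_pos he1]
      refine Ideal.add_mem _ hcg0 ?_
      -- reduction B
      set d'' : κ → ι → ℕ := fun i j => if j = j0 then d i j - 1 else d i j with hd''
      have hsA'le : (∑ j, (Finset.univ.sup fun i => d'' i j)) + 1 ≤ sd := by
        rw [← hsd, ← Finset.add_sum_erase _ (fun j => Finset.univ.sup fun i => d i j)
            (Finset.mem_univ j0),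
          ← Finset.add_sum_erase _ (fun j => Finset.univ.sup fun i => d'' i j)
            (Finset.mem_univ j0)]
        have h2 : ∑ j ∈ Finset.univ.erase j0, (Finset.univ.sup fun i => d'' i j) =
            ∑ j ∈ Finset.univ.erase j0, (Finset.univ.sup fun i => d i j) := by
          apply Finset.sum_congr rfl
          intro j hj
          have hne' : j ≠ j0 := (Finset.mem_erase.mp hj).1
          have : (fun i => d'' i j) = fun i => d i j := by
            funext i
            rw [hd'']
            dsimp only
            rw [if_neg hne']
          rw [this]
        have h1' : (Finset.univ.sup fun i => d'' i j0) + 1 ≤ D := by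
          have hle : (Finset.univ.sup fun i => d'' i j0) ≤ D - 1 := by
            apply Finset.sup_le
            intro i _
            have : d i j0 ≤ D := by
              rw [hD]
              exact Finset.le_sup (f := fun i => d i j0) (Finset.mem_univ i)
            rw [hd'']
            dsimp only
            rw [if_pos rfl]
            omega
          omega
        omega
      have hiii'' : ∀ p : κ → ι, (∀ i, 0 < d'' i (p i)) →
          Submodule.span k (Set.range fun i => ℓ (p i)) =
            Submodule.span k (Set.range (X : σ → MvPolynomial σ k)) := by
        intro p hp
        apply hiii p
        intro i
        have := hp i
        rw [hd''] at this
        dsimp only at this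
        by_cases hj : p i = j0
        · rw [if_pos hj] at this; omega
        · rw [if_neg hj] at this; omega
      have hB := ih σ (∑ j, (Finset.univ.sup fun i => d'' i j)) ι κ ℓ hhom hne d'' rfl
        (by omega) hiii'' (e - 1) (by omega) (homogeneousComponent (e - 1) a)
        (homogeneousComponent_isHomogeneous _ _)
      obtain ⟨c2, hc2⟩ := Ideal.mem_span_range_iff_exists_fun.mp hB
      rw [← hc2, Finset.sum_mul]
      apply Ideal.sum_mem
      intro i _
      rw [mul_assoc]
      apply Ideal.mul_mem_left
      -- (∏ j, ℓ j ^ d'' i j) * ℓ j0 ∈ I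
      by_cases hij : d i j0 = 0
      · have : (fun j => ℓ j ^ d'' i j) = fun j => ℓ j ^ d i j := by
          funext j
          rw [hd'']
          dsimp only
          by_cases hj : j = j0
          · rw [if_pos hj, hj, hij]
          · rw [if_neg hj]
        rw [this]
        exact Ideal.mul_mem_right _ _ (Ideal.subset_span ⟨i, rfl⟩)
      · have hprod : (∏ j, ℓ j ^ d'' i j) * ℓ j0 = ∏ j, ℓ j ^ d i j := by
          have hterm : ∀ j, ℓ j ^ d i j = ℓ j ^ d'' i j * (if j = j0 then ℓ j0 else 1) := by
            intro j
            by_cases hj : j = j0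
            · subst hj
              rw [if_pos rfl, hd'']
              dsimp only
              rw [if_pos rfl]
              conv_lhs => rw [show d i j = d i j - 1 + 1 by omega]
              rw [pow_succ]
            · rw [if_neg hj, mul_one, hd'']
              dsimp only
              rw [if_neg hj]
          conv_rhs => rw [show (fun j => ℓ j ^ d i j) = fun j =>
            ℓ j ^ d'' i j * (if j = j0 then ℓ j0 else 1) from funext hterm]
          rw [Finset.prod_mul_distrib, Finset.prod_ite_eq' Finset.univ j0 (fun _ => ℓ j0),
            if_pos (Finset.mem_univ j0)]
        rw [hprod]
        exact Ideal.subset_span ⟨i, rfl⟩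
    · rw [hsplit, if_neg he1, add_zero]
      exact hcg0


theorem efimov_lemma_products_of_linear_forms
    (k : Type) [Field k] (n s r : ℕ) (hr : 0 < r)
    (ℓ : Fin s → MvPolynomial (Fin n) k)
    (hhom : ∀ j, (ℓ j).IsHomogeneous 1)
    (hne : ∀ j, ℓ j ≠ 0)
    (hindep : ∀ i j, i ≠ j → ∀ c : k, ℓ i ≠ c • ℓ j)
    (d : Fin r → Fin s → ℕ) :
    ((∀ (e : ℕ) (p : MvPolynomial (Fin n) k), p.IsHomogeneous e →
        (∑ j, ((Finset.univ.sup fun i => d i j : ℕ) : ℤ)) - (n : ℤ) + 1 ≤ (e : ℤ) →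
        p ∈ Ideal.span (Set.range fun i => ∏ j, ℓ j ^ d i j)) ↔
      FiniteDimensional k
        (MvPolynomial (Fin n) k ⧸ Ideal.span (Set.range fun i => ∏ j, ℓ j ^ d i j))) ∧
    (FiniteDimensional k
        (MvPolynomial (Fin n) k ⧸ Ideal.span (Set.range fun i => ∏ j, ℓ j ^ d i j)) ↔
      ∀ p : Fin r → Fin s, (∀ i, 0 < d i (p i)) →
        Submodule.span k (Set.range fun i => ℓ (p i)) =
          Submodule.span k
            (Set.range (MvPolynomial.X : Fin n → MvPolynomial (Fin n) k))) := by
  classical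
  set I := Ideal.span (Set.range fun i => ∏ j, ℓ j ^ d i j) with hI
  set sd : ℕ := ∑ j, (Finset.univ.sup fun i => d i j) with hsd
  have hcast : (∑ j, ((Finset.univ.sup fun i => d i j : ℕ) : ℤ)) = (sd : ℤ) := by
    rw [hsd]
    push_cast
    rfl
  -- (iii) → (i)
  have h31 : (∀ p : Fin r → Fin s, (∀ i, 0 < d i (p i)) →
        Submodule.span k (Set.range fun i => ℓ (p i)) =
          Submodule.span k (Set.range (MvPolynomial.X : Fin n → MvPolynomial (Fin n) k))) →
      (∀ (e : ℕ) (p : MvPolynomial (Fin n) k), p.IsHomogeneous e →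
        (∑ j, ((Finset.univ.sup fun i => d i j : ℕ) : ℤ)) - (n : ℤ) + 1 ≤ (e : ℤ) →
        p ∈ I) := by
    intro hiii e p hp hle
    rw [hcast] at hle
    refine efimov_aux (n + sd) (Fin n) sd (Fin s) (Fin r) ℓ hhom hne d hsd.symm
      (by rw [Fintype.card_fin]) hiii e ?_ p hp
    rw [Fintype.card_fin]
    omega
  -- (i) → (ii)
  have h12 : (∀ (e : ℕ) (p : MvPolynomial (Fin n) k), p.IsHomogeneous e →
        (∑ j, ((Finset.univ.sup fun i => d i j : ℕ) : ℤ)) - (n : ℤ) + 1 ≤ (e : ℤ) →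
        p ∈ I) →
      FiniteDimensional k (MvPolynomial (Fin n) k ⧸ I) := by
    intro hi
    set Dbound : Fin n →₀ ℕ := Finsupp.equivFunOnFinite.symm (fun _ => sd) with hDb
    set T : Finset (Fin n →₀ ℕ) := Finset.Iic Dbound with hT
    refine ⟨⟨T.image (fun μ => Ideal.Quotient.mkₐ k I (monomial μ 1)), ?_⟩⟩
    apply le_antisymm le_top
    rintro x -
    obtain ⟨f, rfl⟩ := Ideal.Quotient.mkₐ_surjective k I x
    rw [← sum_homogeneousComponent f, map_sum]
    apply Submodule.sum_mem
    intro i _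
    by_cases hisd : i ≤ sd
    · rw [homogeneousComponent_apply, map_sum]
      apply Submodule.sum_mem
      intro μ hμ
      have hdeg : μ.degree = i := (Finset.mem_filter.mp hμ).2
      have hmono : monomial μ (coeff μ f) = (coeff μ f) • monomial μ 1 := by
        rw [smul_monomial, smul_eq_mul, mul_one]
      rw [hmono, map_smul]
      apply Submodule.smul_mem
      apply Submodule.subset_span
      rw [Finset.coe_image]
      refine ⟨μ, ?_, rfl⟩
      rw [hT]
      simp only [Finset.mem_coe, Finset.mem_Iic]
      rw [Finsupp.le_def]
      intro m
      have h1 : μ m ≤ μ.degree := Finsupp.le_degree m μ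
      have h2 : Dbound m = sd := rfl
      omega
    · have hmem : homogeneousComponent i f ∈ I := by
        apply hi i _ (homogeneousComponent_isHomogeneous i f)
        rw [hcast]
        push_cast
        omega
      rw [show Ideal.Quotient.mkₐ k I (homogeneousComponent i f) = 0 from
        (Ideal.Quotient.eq_zero_iff_mem).mpr hmem]
      exact Submodule.zero_mem _
  -- (ii) → (iii)
  have h23 : FiniteDimensional k (MvPolynomial (Fin n) k ⧸ I) →
      (∀ p : Fin r → Fin s, (∀ i, 0 < d i (p i)) →
        Submodule.span k (Set.range fun i => ℓ (p i)) =
          Submodule.span k (Set.range (MvPolynomial.X : Fin n → MvPolynomial (Fin n) k))) := by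
    intro hfd p hp
    by_contra hspan
    set v0 : Fin r → (Fin n → k) :=
      fun i => fun m => coeff (Finsupp.single m 1) (ℓ (p i)) with hv0
    set W : Submodule k (Fin n → k) := Submodule.span k (Set.range v0) with hW
    have hWne : W < ⊤ := by
      rw [lt_top_iff_ne_top]
      intro hWtop
      apply hspan
      apply le_antisymm
      · rw [Submodule.span_le]
        rintro _ ⟨i, rfl⟩
        exact homog_one_mem_span_X (hhom (p i))
      · rw [Submodule.span_le]
        rintro _ ⟨m, rfl⟩
        have hem : (fun m' => if m = m' then (1:k) else 0) ∈ W := hWtop ▸ Submodule.mem_top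
        obtain ⟨c, hc⟩ := (Submodule.mem_span_range_iff_exists_fun k).mp hem
        have hXeq : (X m : MvPolynomial (Fin n) k) = ∑ i, c i • ℓ (p i) := by
          have hhs : (∑ i, c i • ℓ (p i)).IsHomogeneous 1 :=
            IsHomogeneous.sum _ _ _ fun i _ => by
              rw [smul_eq_C_mul]; exact (hhom (p i)).C_mul _
          rw [lin_rep hhs]
          rw [show (X m : MvPolynomial (Fin n) k) =
            ∑ m' : Fin n, C (if m = m' then (1:k) else 0) * X m' by
              rw [Finset.sum_eq_single m]
              · rw [if_pos rfl, map_one, one_mul]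
              · intro b _ hb
                rw [if_neg (fun h => hb h.symm), map_zero, zero_mul]
              · intro h
                exact absurd (Finset.mem_univ m) h]
          apply Finset.sum_congr rfl
          intro m' _
          have hcoeff : coeff (Finsupp.single m' 1) (∑ i, c i • ℓ (p i)) =
              ∑ i, c i * v0 i m' := by
            rw [MvPolynomial.coeff_sum]
            apply Finset.sum_congr rfl
            intro i _
            rw [MvPolynomial.coeff_smul, smul_eq_mul]
          have hcval := congrFun hc m'
          simp only [Finset.sum_apply, Pi.smul_apply, smul_eq_mul] at hcval
          rw [hcoeff, hcval]
        rw [hXeq]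
        exact Submodule.sum_mem _ fun i _ =>
          Submodule.smul_mem _ _ (Submodule.subset_span ⟨i, rfl⟩)
    obtain ⟨g, hgne, hgbot⟩ := Submodule.exists_dual_map_eq_bot_of_lt_top hWne inferInstance
    set v : Fin n → k := fun m => g (fun j => if m = j then (1:k) else 0) with hv
    have hgv : ∀ w : Fin n → k, g w = ∑ m, w m * v m := by
      intro w
      rw [LinearMap.pi_apply_eq_sum_univ g w]
      apply Finset.sum_congr rfl
      intro m _
      rw [smul_eq_mul]
    have hvW : ∀ w ∈ W, ∑ m, w m * v m = 0 := by
      intro w hw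
      rw [← hgv]
      have : g w ∈ Submodule.map g W := Submodule.mem_map_of_mem hw
      rwa [hgbot, Submodule.mem_bot] at this
    have hvne : ∃ m1, v m1 ≠ 0 := by
      by_contra hcon
      push_neg at hcon
      refine hgne (LinearMap.ext fun w => ?_)
      rw [hgv]
      simp [hcon]
    obtain ⟨m1, hm1⟩ := hvne
    set Φ : MvPolynomial (Fin n) k →ₐ[k] Polynomial k :=
      aeval (fun m => Polynomial.C (v m) * Polynomial.X) with hΦ
    have hΦX : ∀ m, Φ (X m) = Polynomial.C (v m) * Polynomial.X := fun m => aeval_X _ m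
    have hΦC : ∀ a : k, Φ (C a) = Polynomial.C a := by
      intro a
      rw [hΦ, aeval_C, ← Polynomial.C_eq_algebraMap]
    have hΦlin : ∀ q : MvPolynomial (Fin n) k, q.IsHomogeneous 1 →
        Φ q = Polynomial.C (∑ m, coeff (Finsupp.single m 1) q * v m) * Polynomial.X := by
      intro q hq
      rw [show Φ q = Φ (∑ m : Fin n, C (coeff (Finsupp.single m 1) q) * X m) from
        congrArg _ (lin_rep hq), map_sum]
      have hterm : ∀ m : Fin n, Φ (C (coeff (Finsupp.single m 1) q) * X m) =
          Polynomial.C (coeff (Finsupp.single m 1) q * v m) * Polynomial.X := by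
        intro m
        rw [map_mul, hΦC, hΦX m, map_mul, ← mul_assoc]
      simp only [hterm]
      rw [← Finset.sum_mul, ← map_sum]
    have hΦ0 : ∀ i : Fin r, Φ (ℓ (p i)) = 0 := by
      intro i
      rw [hΦlin _ (hhom (p i)), hvW (v0 i) (Submodule.subset_span ⟨i, rfl⟩), map_zero,
        zero_mul]
    have hΦP : ∀ a ∈ I, Φ a = 0 := by
      intro a ha
      have hker : I ≤ RingHom.ker (Φ : MvPolynomial (Fin n) k →+* Polynomial k) := by
        rw [hI, Ideal.span_le]
        rintro _ ⟨i, rfl⟩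
        rw [SetLike.mem_coe, RingHom.mem_ker]
        show Φ (∏ j, ℓ j ^ d i j) = 0
        rw [map_prod]
        apply Finset.prod_eq_zero (Finset.mem_univ (p i))
        rw [map_pow, hΦ0 i, zero_pow (hp i).ne']
      exact hker ha
    set Λ := Ideal.Quotient.liftₐ I Φ hΦP with hΛ
    have hΛsurj : Function.Surjective Λ := by
      intro y
      have hXrange : Polynomial.X ∈ Φ.range := by
        refine ⟨C (v m1)⁻¹ * X m1, ?_⟩
        show Φ (C (v m1)⁻¹ * X m1) = Polynomial.X
        rw [map_mul, hΦC, hΦX m1, ← mul_assoc, ← map_mul, inv_mul_cancel₀ hm1, map_one,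
          one_mul]
      have hrange : (⊤ : Subalgebra k (Polynomial k)) ≤ Φ.range := by
        rw [← Polynomial.adjoin_X]
        apply Algebra.adjoin_le
        rw [Set.singleton_subset_iff]
        exact hXrange
      obtain ⟨x, hx⟩ := hrange (Algebra.mem_top (x := y))
      refine ⟨Ideal.Quotient.mkₐ k I x, ?_⟩
      rw [hΛ]
      show (Ideal.Quotient.liftₐ I Φ hΦP).comp (Ideal.Quotient.mkₐ k I) x = y
      rw [Ideal.Quotient.liftₐ_comp]
      exact hx
    have hfin : Module.Finite k (Polynomial k) :=
      Module.Finite.of_surjective Λ.toLinearMap hΛsurj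
    exact Polynomial.not_finite hfin
  exact ⟨⟨h12, fun h => h31 (h23 h)⟩, ⟨h23, fun h => h12 (h31 h)⟩⟩
end
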